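/- Let t ∈ (0,1] and define β : ℤ → ℝ by β(n) = sgn(n)·|n|^{1/t}·log|n| for |n| ≥ 1 and β(0) = 0. Then Λ_β = {(n, β(n)) : n ∈ ℤ} is a spectrum of the self-affine measure μ = μ_{R,B} for R = [[2,1],[0,2]] and B = {(0,0),(1,0)}, and it satisfies dim_Be(Λ_β) = t and D_t^+(Λ_β) = 0. -/

import Mathlib

open MeasureTheory Filter Set Metric
open scoped ENNReal

noncomputable section

/-- The plane with the Euclidean metric. -/
abbrev Plane : Type := EuclideanSpace ℝ (Fin 2)

/-- The point `(a, b)` of the Euclidean plane. -/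
def pt (a b : ℝ) : Plane := WithLp.toLp 2 ![a, b]

/-- The self-affine measure `μ_{R,B}` for `R = [[2,1],[0,2]]`, `B = {(0,0),(1,0)}`:
the pushforward of Lebesgue measure on `[0,1]` under `x ↦ (x, 0)`. -/
def muRB : Measure Plane :=
  Measure.map (fun x : ℝ => pt x 0) (volume.restrict (Set.Icc (0:ℝ) 1))

instance : IsProbabilityMeasure (volume.restrict (Set.Icc (0:ℝ) 1)) :=
  ⟨by simp [Real.volume_Icc]⟩

lemma measurable_pt0 : Measurable (fun x : ℝ => pt x 0) := by
  unfold pt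
  refine Measurable.comp (g := WithLp.toLp 2) (f := fun x : ℝ => ![x, 0])
    (WithLp.measurable_toLp 2 _) ?_
  refine measurable_pi_lambda _ (fun i => ?_)
  fin_cases i
  · simp only [Matrix.cons_val_zero]
    exact measurable_id
  · simp only [Matrix.cons_val_one, Matrix.head_cons]
    exact measurable_const

instance : IsProbabilityMeasure muRB :=
  Measure.isProbabilityMeasure_map measurable_pt0.aemeasurable

/-- The Fourier transform `μ̂(ξ) = ∫ e^{-2πi⟨ξ,x⟩} dμ(x)` of a measure on the plane. -/
def fourierTransform (μ : Measure Plane) (ξ : Plane) : ℂ :=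
  ∫ x, Complex.exp ((-(2 * Real.pi * (inner ℝ ξ x : ℝ)) : ℝ) * Complex.I) ∂μ

/-- The exponential function `e_λ(x) = e^{-2πi⟨λ,x⟩}`. -/
def expFn (lam : Plane) : Plane → ℂ :=
  fun x => Complex.exp ((-(2 * Real.pi * (inner ℝ lam x : ℝ)) : ℝ) * Complex.I)

lemma expFn_memLp (μ : Measure Plane) [IsFiniteMeasure μ] (lam : Plane) :
    MemLp (expFn lam) 2 μ := by
  refine MemLp.of_bound ?_ 1 ?_
  · apply Continuous.aestronglyMeasurable
    unfold expFn
    have h1 : Continuous fun x : Plane => (inner ℝ lam x : ℝ) :=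
      continuous_const.inner continuous_id
    exact Complex.continuous_exp.comp
      ((Complex.continuous_ofReal.comp ((continuous_const.mul h1).neg)).mul continuous_const)
  · refine Eventually.of_forall fun x => ?_
    unfold expFn
    rw [Complex.norm_exp_ofReal_mul_I]

/-- The exponential `e_λ` as an element of `L²(μ)`. -/
def expLp (μ : Measure Plane) [IsFiniteMeasure μ] (lam : Plane) : Lp ℂ 2 μ :=
  (expFn_memLp μ lam).toLp _

/-- `Λ` is an orthogonal set of `μ`: the exponentials `{e_λ : λ ∈ Λ}` form an
orthonormal family in `L²(μ)`. -/
def IsOrthogonalSet (μ : Measure Plane) [IsFiniteMeasure μ] (Λ : Set Plane) : Prop :=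
  Orthonormal ℂ (fun lam : Λ => expLp μ lam)

/-- `Λ` is a spectrum of `μ`: the exponentials `{e_λ : λ ∈ Λ}` form an
orthonormal basis of `L²(μ)`. -/
def IsSpectrum (μ : Measure Plane) [IsFiniteMeasure μ] (Λ : Set Plane) : Prop :=
  Orthonormal ℂ (fun lam : Λ => expLp μ lam) ∧
    (Submodule.span ℂ (Set.range (fun lam : Λ => expLp μ lam))).topologicalClosure = ⊤

/-- The upper `r`-Beurling density
`D_r^+(Λ) = limsup_{h→∞} sup_{x} #(Λ ∩ B(x,h)) / h^r`. -/
def beurlingDensity (r : ℝ) (Λ : Set Plane) : ℝ≥0∞ :=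
  limsup (fun h : ℝ =>
    ⨆ x : Plane, ((Λ ∩ Metric.ball x h).encard : ℝ≥0∞) / ENNReal.ofReal (h ^ r)) atTop

/-- The upper `r`-density (centered at the origin)
`B_r^+(Λ) = limsup_{h→∞} #(Λ ∩ B(0,h)) / h^r`. -/
def upperDensity (r : ℝ) (Λ : Set Plane) : ℝ≥0∞ :=
  limsup (fun h : ℝ =>
    ((Λ ∩ Metric.ball (0 : Plane) h).encard : ℝ≥0∞) / ENNReal.ofReal (h ^ r)) atTop

/-- The Beurling dimension `dim_Be(Λ) = sup {r > 0 : D_r^+(Λ) = ∞}`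
(equal to `0` when the set is empty, by the convention `sSup ∅ = 0` in `ℝ`). -/
def beurlingDim (Λ : Set Plane) : ℝ :=
  sSup {r : ℝ | 0 < r ∧ beurlingDensity r Λ = ⊤}

/-- The Banach dimension `dim_Ba(Λ) = sup {r > 0 : B_r^+(Λ) = ∞}`. -/
def banachDim (Λ : Set Plane) : ℝ :=
  sSup {r : ℝ | 0 < r ∧ upperDensity r Λ = ⊤}

/-- The sign of an integer, as a real number. -/
def isgn (n : ℤ) : ℝ := (Int.sign n : ℝ)

end


-- ===================== auxiliary development =====================
open scoped Real ComplexConjugate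

noncomputable section Aux

lemma pt_apply0 (a b : ℝ) : pt a b 0 = a := rfl
lemma pt_apply1 (a b : ℝ) : pt a b 1 = b := rfl

lemma pt_injective0 {a b a' b' : ℝ} (h : pt a b = pt a' b') : a = a' := by
  have := congrArg (fun v : Plane => v 0) h; simpa only [pt_apply0] using this

lemma inner_pt (l : Plane) (x : ℝ) : (inner ℝ l (pt x 0) : ℝ) = l 0 * x := by
  simp [pt, PiLp.inner_apply, RCLike.inner_apply, Fin.sum_univ_two, mul_comm]

lemma intexp (k : ℤ) (hk : k ≠ 0) :
    ∫ x in (0:ℝ)..1, Complex.exp ((2 * ↑π * Complex.I * k) * x) = 0 := by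
  have hc : (2 * ↑π * Complex.I * k : ℂ) ≠ 0 := by
    apply mul_ne_zero (mul_ne_zero (mul_ne_zero two_ne_zero ?_) Complex.I_ne_zero) ?_
    · exact Complex.ofReal_ne_zero.2 Real.pi_ne_zero
    · exact_mod_cast Int.cast_ne_zero.2 hk
  rw [integral_exp_mul_complex hc]
  have h1 : Complex.exp ((2 * ↑π * Complex.I * k) * 1) = 1 := by
    rw [mul_one]
    have := Complex.exp_int_mul_two_pi_mul_I k
    rw [← this]; ring_nf
  push_cast
  rw [h1]; simp

lemma expFn_continuous (lam : Plane) : Continuous (expFn lam) := by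
  unfold expFn
  have h1 : Continuous fun x : Plane => (inner ℝ lam x : ℝ) :=
    continuous_const.inner continuous_id
  exact Complex.continuous_exp.comp
    ((Complex.continuous_ofReal.comp ((continuous_const.mul h1).neg)).mul continuous_const)

lemma integral_muRB (φ : Plane → ℂ) (hφ : AEStronglyMeasurable φ muRB) :
    ∫ y, φ y ∂muRB = ∫ x in Set.Icc (0:ℝ) 1, φ (pt x 0) := by
  unfold muRB
  rw [integral_map measurable_pt0.aemeasurable hφ]

lemma inner_expLp (l1 l2 : Plane) :
    (inner ℂ (expLp muRB l1) (expLp muRB l2) : ℂ) =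
      ∫ x in Set.Icc (0:ℝ) 1, Complex.exp ((2 * ↑π * Complex.I * (↑(l1 0) - ↑(l2 0))) * x) := by
  rw [expLp, expLp, MeasureTheory.L2.inner_def]
  have h1 : (∫ y, (inner ℂ ((expFn_memLp muRB l1).toLp (expFn l1) y)
      (((expFn_memLp muRB l2).toLp (expFn l2)) y) : ℂ) ∂muRB)
      = ∫ y, (inner ℂ (expFn l1 y) (expFn l2 y) : ℂ) ∂muRB := by
    apply integral_congr_ae
    filter_upwards [(expFn_memLp muRB l1).coeFn_toLp, (expFn_memLp muRB l2).coeFn_toLp]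
      with y hy1 hy2
    rw [hy1, hy2]
  rw [h1]
  have h2 : AEStronglyMeasurable (fun y => (inner ℂ (expFn l1 y) (expFn l2 y) : ℂ)) muRB := by
    apply Continuous.aestronglyMeasurable
    exact Continuous.inner (expFn_continuous l1) (expFn_continuous l2)
  rw [integral_muRB _ h2]
  apply setIntegral_congr_fun measurableSet_Icc
  intro x _
  show (inner ℂ (expFn l1 (pt x 0)) (expFn l2 (pt x 0)) : ℂ) = _
  unfold expFn
  rw [RCLike.inner_apply', inner_pt l1 x, inner_pt l2 x, ← Complex.exp_conj, ← Complex.exp_add]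
  congr 1
  simp only [map_mul, Complex.conj_ofReal, Complex.conj_I]
  push_cast
  ring

lemma inner_expLp_int (n m : ℤ) (y y' : ℝ) :
    (inner ℂ (expLp muRB (pt (n:ℝ) y)) (expLp muRB (pt (m:ℝ) y')) : ℂ) =
      if n = m then 1 else 0 := by
  rw [inner_expLp, pt_apply0, pt_apply0]
  by_cases h : n = m
  · subst h
    simp only [if_pos rfl, sub_self, mul_zero, zero_mul, Complex.exp_zero]
    rw [setIntegral_const]
    have : (volume (Set.Icc (0:ℝ) 1)) = 1 := by simp [Real.volume_Icc]
    simp [measureReal_def, this]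
  · rw [if_neg h]
    have hsub : (((n:ℝ):ℂ) - ((m:ℝ):ℂ)) = ((n - m : ℤ) : ℂ) := by push_cast; ring
    rw [hsub]
    rw [MeasureTheory.integral_Icc_eq_integral_Ioc,
      ← intervalIntegral.integral_of_le (zero_le_one (α := ℝ))]
    exact intexp (n - m) (sub_ne_zero.2 h)


lemma orthonormal_range_aux (y : ℤ → ℝ) :
    Orthonormal ℂ (fun lam : (Set.range fun n : ℤ => pt (n:ℝ) (y n)) => expLp muRB lam) := by
  classical
  rw [orthonormal_iff_ite]
  rintro ⟨i, hi⟩ ⟨j, hj⟩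
  obtain ⟨n, rfl⟩ := hi
  obtain ⟨m, rfl⟩ := hj
  rw [inner_expLp_int]
  by_cases h : n = m
  · subst h; simp
  · rw [if_neg h, if_neg]
    intro heq
    apply h
    have := pt_injective0 (Subtype.mk_eq_mk.mp heq)
    exact_mod_cast this

lemma cz (g : ℝ → ℂ) (hg : MemLp g 2 (volume.restrict (Set.Ioc (0:ℝ) 1)))
    (h : ∀ k : ℤ, ∫ x in Set.Ioc (0:ℝ) 1,
      Complex.exp ((2 * ↑π * Complex.I * k) * x) * g x = 0) :
    g =ᵐ[volume.restrict (Set.Ioc (0:ℝ) 1)] 0 := by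
  haveI : Fact ((0:ℝ) < 1) := ⟨one_pos⟩
  set ν := volume.restrict (Set.Ioc (0:ℝ) 1) with hν
  set g' := hg.aestronglyMeasurable.mk g with hg'def
  have hg'meas : StronglyMeasurable g' := hg.aestronglyMeasurable.stronglyMeasurable_mk
  have hgg' : g =ᵐ[ν] g' := hg.aestronglyMeasurable.ae_eq_mk
  have hg'L2 : MemLp g' 2 ν := hg.ae_eq hgg'
  have h' : ∀ k : ℤ, ∫ x in Set.Ioc (0:ℝ) 1,
      Complex.exp ((2 * ↑π * Complex.I * k) * x) * g' x = 0 := by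
    intro k
    rw [← h k]
    apply integral_congr_ae
    filter_upwards [hgg'] with x hx
    rw [hx]
  set G : AddCircle (1:ℝ) → ℂ := AddCircle.liftIoc 1 0 g' with hGdef
  have hGsm : StronglyMeasurable G := by
    have hm : Measurable (fun z : AddCircle (1:ℝ) => ((AddCircle.equivIoc 1 0) z : ℝ)) :=
      measurable_subtype_coe.comp (AddCircle.measurableEquivIoc 1 0).measurable
    exact hg'meas.comp_measurable hm
  have mp : MeasurePreserving ((↑) : ℝ → AddCircle (1:ℝ)) ν volume := by
    have := AddCircle.measurePreserving_mk (T := (1:ℝ)) 0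
    simpa using this
  have hmap : Measure.map ((↑) : ℝ → AddCircle (1:ℝ)) ν
      = (AddCircle.haarAddCircle : Measure (AddCircle (1:ℝ))) := by
    rw [mp.map_eq, AddCircle.volume_eq_smul_haarAddCircle]
    simp
  have hGcoe : ∀ᵐ x ∂ν, G ((x : ℝ) : AddCircle (1:ℝ)) = g' x := by
    filter_upwards [ae_restrict_mem measurableSet_Ioc] with x hx
    have hx' : x ∈ Set.Ioc (0:ℝ) (0+1) := by simpa using hx
    exact AddCircle.liftIoc_coe_apply hx'
  have hGL2 : MemLp G 2 (AddCircle.haarAddCircle : Measure (AddCircle (1:ℝ))) := by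
    rw [← hmap]
    rw [memLp_map_measure_iff hGsm.aestronglyMeasurable AddCircle.measurable_mk'.aemeasurable]
    exact hg'L2.ae_eq (by filter_upwards [hGcoe] with x hx; exact hx.symm)
  set F2 : Lp ℂ 2 (AddCircle.haarAddCircle : Measure (AddCircle (1:ℝ))) := hGL2.toLp G with hF2
  have hcoeff : ∀ i : ℤ, fourierCoeff (⇑F2) i = 0 := by
    intro i
    have h1 : fourierCoeff (⇑F2) i = fourierCoeff G i := by
      unfold fourierCoeff
      apply integral_congr_ae
      filter_upwards [hGL2.coeFn_toLp] with z hz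
      rw [hz]
    rw [h1, fourierCoeff_eq_intervalIntegral G i 0]
    have h2 : ∫ x in (0:ℝ)..(0+1), (fourier (-i) (x : AddCircle (1:ℝ))) • G x
        = ∫ x in Set.Ioc (0:ℝ) 1, (fourier (-i) (x : AddCircle (1:ℝ))) • G x := by
      rw [zero_add, intervalIntegral.integral_of_le (zero_le_one (α := ℝ))]
    rw [h2]
    have h3 : ∫ x in Set.Ioc (0:ℝ) 1, (fourier (-i) (x : AddCircle (1:ℝ))) • G x
        = ∫ x in Set.Ioc (0:ℝ) 1,
            Complex.exp ((2 * ↑π * Complex.I * (-i : ℤ)) * x) * g' x := by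
      apply integral_congr_ae
      filter_upwards [hGcoe] with x hx
      rw [smul_eq_mul, hx, fourier_coe_apply]
      push_cast
      ring_nf
    rw [h3, h' (-i)]
    simp
  have hF20 : F2 = 0 := by
    apply fourierBasis.repr.map_eq_zero_iff.mp
    apply lp.ext
    funext i
    rw [fourierBasis_repr]
    simpa using hcoeff i
  have hG0 : G =ᵐ[(AddCircle.haarAddCircle : Measure (AddCircle (1:ℝ)))] 0 := by
    have h1 : ⇑F2 =ᵐ[(AddCircle.haarAddCircle : Measure (AddCircle (1:ℝ)))] G := hGL2.coeFn_toLp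
    have h2 : ⇑F2 =ᵐ[(AddCircle.haarAddCircle : Measure (AddCircle (1:ℝ)))] 0 := by
      rw [hF20]; exact Lp.coeFn_zero ℂ 2 _
    exact h1.symm.trans h2
  have hpull : (G ∘ ((↑) : ℝ → AddCircle (1:ℝ))) =ᵐ[ν] (0 : AddCircle (1:ℝ) → ℂ) ∘ ((↑) : ℝ → AddCircle (1:ℝ)) :=
    MeasureTheory.ae_eq_comp AddCircle.measurable_mk'.aemeasurable (by rw [hmap]; exact hG0)
  filter_upwards [hgg', hGcoe, hpull] with x h1 h2 h3
  have : G ((x : ℝ) : AddCircle (1:ℝ)) = 0 := h3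
  rw [h1, ← h2, this]
  rfl


set_option maxHeartbeats 1000000 in
lemma inner_expLp_Lp (l : Plane) (f : Lp ℂ 2 muRB) :
    (inner ℂ (expLp muRB l) f : ℂ)
      = ∫ x in Set.Icc (0:ℝ) 1,
          Complex.exp ((2 * ↑π * Complex.I * (l 0 : ℝ)) * x) * f (pt x 0) := by
  rw [expLp, MeasureTheory.L2.inner_def]
  have h1 : ∫ y, (inner ℂ ((expFn_memLp muRB l).toLp (expFn l) y) (f y) : ℂ) ∂muRB
      = ∫ y, (starRingEnd ℂ) (expFn l y) * f y ∂muRB := by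
    apply integral_congr_ae
    filter_upwards [(expFn_memLp muRB l).coeFn_toLp] with yy hy
    rw [RCLike.inner_apply', hy]
  rw [h1]
  have h2 : AEStronglyMeasurable (fun yy => (starRingEnd ℂ) (expFn l yy) * f yy) muRB := by
    apply AEStronglyMeasurable.mul ?_ (Lp.aestronglyMeasurable f)
    exact ((expFn_continuous l).star).aestronglyMeasurable
  rw [integral_muRB _ h2]
  apply setIntegral_congr_fun measurableSet_Icc
  intro x _
  show (starRingEnd ℂ) (expFn l (pt x 0)) * f (pt x 0) = _
  congr 1
  unfold expFn
  rw [inner_pt l x, ← Complex.exp_conj]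
  congr 1
  simp only [map_mul, Complex.conj_ofReal, Complex.conj_I]
  push_cast
  ring

lemma restrict_Icc_eq_Ioc :
    (volume.restrict (Set.Icc (0:ℝ) 1)) = volume.restrict (Set.Ioc (0:ℝ) 1) :=
  (Measure.restrict_congr_set Ioc_ae_eq_Icc).symm

lemma inner_expLp_Lp_int (k : ℤ) (yk : ℝ) (f : Lp ℂ 2 muRB) :
    (inner ℂ (expLp muRB (pt (k:ℝ) yk)) f : ℂ)
      = ∫ x in Set.Ioc (0:ℝ) 1,
          Complex.exp ((2 * ↑π * Complex.I * (k:ℂ)) * x) * f (pt x 0) := by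
  rw [inner_expLp_Lp, pt_apply0, restrict_Icc_eq_Ioc]
  norm_cast

lemma span_closure_aux (y : ℤ → ℝ) :
    (Submodule.span ℂ (Set.range (fun lam : (Set.range fun n : ℤ => pt (n:ℝ) (y n)) =>
      expLp muRB lam))).topologicalClosure = ⊤ := by
  rw [Submodule.topologicalClosure_eq_top_iff, Submodule.eq_bot_iff]
  intro f hf
  have horth : ∀ n : ℤ, (inner ℂ (expLp muRB (pt (n:ℝ) (y n))) f : ℂ) = 0 := by
    intro n
    exact (Submodule.mem_orthogonal _ f).mp hf _
      (Submodule.subset_span ⟨⟨_, ⟨n, rfl⟩⟩, rfl⟩)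
  have hmu : muRB = Measure.map (fun x : ℝ => pt x 0)
      (volume.restrict (Set.Icc (0:ℝ) 1)) := rfl
  have hgL2 : MemLp (fun x : ℝ => f (pt x 0)) 2 (volume.restrict (Set.Ioc (0:ℝ) 1)) := by
    have h1 : MemLp ((⇑f) ∘ (fun x : ℝ => pt x 0)) 2 (volume.restrict (Set.Icc (0:ℝ) 1)) :=
      (memLp_map_measure_iff (Lp.aestronglyMeasurable f)
        measurable_pt0.aemeasurable).mp (Lp.memLp f)
    rw [restrict_Icc_eq_Ioc] at h1
    exact h1
  have hints : ∀ k : ℤ, ∫ x in Set.Ioc (0:ℝ) 1,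
      Complex.exp ((2 * ↑π * Complex.I * (k:ℂ)) * x) * f (pt x 0) = 0 := by
    intro k
    rw [← inner_expLp_Lp_int k (y k) f]
    exact horth k
  have hg0 := cz _ hgL2 hints
  -- transfer to the strongly measurable representative
  set f' := (Lp.aestronglyMeasurable f).mk f with hf'def
  have hf'sm : StronglyMeasurable f' := (Lp.aestronglyMeasurable f).stronglyMeasurable_mk
  have hff' : ⇑f =ᵐ[muRB] f' := (Lp.aestronglyMeasurable f).ae_eq_mk
  have hcomp : (fun x : ℝ => f (pt x 0))
      =ᵐ[volume.restrict (Set.Icc (0:ℝ) 1)] (fun x : ℝ => f' (pt x 0)) := by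
    have h3 : ⇑f =ᵐ[Measure.map (fun x : ℝ => pt x 0) (volume.restrict (Set.Icc (0:ℝ) 1))] f' := by
      rw [← hmu]; exact hff'
    exact MeasureTheory.ae_eq_comp measurable_pt0.aemeasurable h3
  have hf'comp0 : (fun x : ℝ => f' (pt x 0))
      =ᵐ[volume.restrict (Set.Icc (0:ℝ) 1)] 0 := by
    refine hcomp.symm.trans ?_
    rw [restrict_Icc_eq_Ioc]
    exact hg0
  have hf'0 : f' =ᵐ[muRB] 0 := by
    rw [hmu]
    have hms : MeasurableSet {yy : Plane | f' yy = 0} :=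
      hf'sm.measurable (measurableSet_singleton (0:ℂ))
    have h4 : ∀ᵐ yy ∂(Measure.map (fun x : ℝ => pt x 0)
        (volume.restrict (Set.Icc (0:ℝ) 1))), f' yy = 0 := by
      rw [MeasureTheory.ae_map_iff measurable_pt0.aemeasurable hms]
      filter_upwards [hf'comp0] with x hx using hx
    exact h4
  have : ⇑f =ᵐ[muRB] 0 := hff'.trans hf'0
  exact Lp.eq_zero_iff_ae_eq_zero.mpr this


/-! ### Counting machinery for the Beurling density -/

def bfun (t : ℝ) (n : ℤ) : ℝ := isgn n * |(n : ℝ)| ^ (1 / t) * Real.log |(n : ℝ)|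

def phifun (t : ℝ) (x : ℝ) : ℝ := x ^ (1 / t) * Real.log x

def Ff (t : ℝ) (n : ℤ) : Plane := pt (n : ℝ) (bfun t n)

def Lam (t : ℝ) : Set Plane := Set.range (Ff t)

lemma isgn_of_pos {n : ℤ} (h : 1 ≤ n) : isgn n = 1 := by
  unfold isgn
  rw [Int.sign_eq_one_iff_pos.mpr (by omega)]
  simp

lemma bfun_eq_phifun {t : ℝ} {n : ℤ} (h : 1 ≤ n) : bfun t n = phifun t (n : ℝ) := by
  unfold bfun phifun
  rw [isgn_of_pos h, abs_of_pos (by exact_mod_cast (by omega : (0:ℤ) < n) : (0:ℝ) < (n:ℝ)),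
    one_mul]

lemma bfun_neg (t : ℝ) (n : ℤ) : bfun t (-n) = - bfun t n := by
  unfold bfun isgn
  rw [Int.sign_neg]
  push_cast
  rw [abs_neg]
  ring

lemma bfun_zero (t : ℝ) : bfun t 0 = 0 := by simp [bfun, isgn]

lemma phifun_nonneg {t x : ℝ} (hx : 1 ≤ x) : 0 ≤ phifun t x := by
  unfold phifun
  have h1 : (0:ℝ) ≤ x ^ (1/t) := Real.rpow_nonneg (by linarith) _
  have h2 : (0:ℝ) ≤ Real.log x := Real.log_nonneg hx
  positivity

lemma phifun_mono {t : ℝ} (ht0 : 0 < t) {x y : ℝ} (hx : 1 ≤ x) (hxy : x ≤ y) :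
    phifun t x ≤ phifun t y := by
  unfold phifun
  apply mul_le_mul
  · exact Real.rpow_le_rpow (by linarith) hxy (by positivity)
  · exact Real.log_le_log (by linarith) hxy
  · exact Real.log_nonneg hx
  · exact Real.rpow_nonneg (by linarith) _

lemma rpow_superadd {x y p : ℝ} (hx : 0 ≤ x) (hy : 0 ≤ y) (hp : 1 ≤ p) :
    x ^ p + y ^ p ≤ (x + y) ^ p := by
  have h := NNReal.add_rpow_le_rpow_add x.toNNReal y.toNNReal hp
  have h2 := NNReal.coe_le_coe.mpr h
  push_cast at h2
  rwa [Real.coe_toNNReal x hx, Real.coe_toNNReal y hy] at h2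

lemma one_le_one_div_t {t : ℝ} (ht0 : 0 < t) (ht1 : t ≤ 1) : 1 ≤ 1 / t := by
  rw [le_div_iff₀ ht0]; linarith

lemma phifun_super {t : ℝ} (ht0 : 0 < t) (ht1 : t ≤ 1) {a n : ℝ}
    (ha : 1 ≤ a) (h : a + 1 ≤ n) : phifun t (n - a) ≤ phifun t n - phifun t a := by
  have hp : 1 ≤ 1 / t := one_le_one_div_t ht0 ht1
  have hn1 : 1 ≤ n := by linarith
  have hna : 1 ≤ n - a := by linarith
  have l1 : a ^ (1/t) * Real.log a ≤ a ^ (1/t) * Real.log n :=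
    mul_le_mul_of_nonneg_left (Real.log_le_log (by linarith) (by linarith))
      (Real.rpow_nonneg (by linarith) _)
  have l2 : (n - a) ^ (1/t) ≤ n ^ (1/t) - a ^ (1/t) := by
    have h2 := rpow_superadd (x := n - a) (y := a) (by linarith) (by linarith) hp
    rw [sub_add_cancel] at h2
    linarith
  have l3 : (n - a) ^ (1/t) * Real.log (n - a) ≤ (n - a) ^ (1/t) * Real.log n :=
    mul_le_mul_of_nonneg_left (Real.log_le_log (by linarith) (by linarith))
      (Real.rpow_nonneg (by linarith) _)
  have l4 : (n - a) ^ (1/t) * Real.log n ≤ (n ^ (1/t) - a ^ (1/t)) * Real.log n :=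
    mul_le_mul_of_nonneg_right l2 (Real.log_nonneg hn1)
  have l5 : (n ^ (1/t) - a ^ (1/t)) * Real.log n
      = n ^ (1/t) * Real.log n - a ^ (1/t) * Real.log n := by ring
  unfold phifun
  linarith

lemma count_pos_side {t : ℝ} (ht0 : 0 < t) (ht1 : t ≤ 1) (c h : ℝ) :
    {n : ℤ | 1 ≤ n ∧ |bfun t n - c| < h}.encard
      ≤ {n : ℤ | 1 ≤ n ∧ bfun t n < 2 * h}.encard + 1 := by
  set S := {n : ℤ | 1 ≤ n ∧ |bfun t n - c| < h} with hS
  set T := {n : ℤ | 1 ≤ n ∧ bfun t n < 2 * h} with hT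
  rcases S.eq_empty_or_nonempty with he | hne
  · rw [he]; simp
  · obtain ⟨a, haS, hmin⟩ := Int.exists_least_of_bdd (P := fun n => n ∈ S)
      ⟨1, fun z hz => hz.1⟩ hne
    have key : ∀ n ∈ S \ {a}, n - a ∈ T := by
      rintro n ⟨hnS, hna⟩
      have h1 : a + 1 ≤ n := by
        have := hmin n hnS
        have : a ≠ n := fun he => hna (he ▸ rfl)
        omega
      have h2 : (1:ℤ) ≤ n - a := by omega
      constructor
      · exact h2
      · have hb : bfun t (n - a) = phifun t ((n:ℝ) - (a:ℝ)) := by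
          rw [bfun_eq_phifun h2]; push_cast; ring_nf
        have hsup := phifun_super ht0 ht1
          (a := (a:ℝ)) (n := (n:ℝ))
          (by exact_mod_cast haS.1) (by exact_mod_cast h1)
        have hba : bfun t a = phifun t (a:ℝ) := bfun_eq_phifun haS.1
        have hbn : bfun t n = phifun t (n:ℝ) := bfun_eq_phifun hnS.1
        have habs1 := abs_lt.mp hnS.2
        have habs2 := abs_lt.mp haS.2
        rw [hb]
        calc phifun t ((n:ℝ) - (a:ℝ)) ≤ phifun t (n:ℝ) - phifun t (a:ℝ) := hsup
        _ = bfun t n - bfun t a := by rw [hba, hbn]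
        _ < 2 * h := by linarith [habs1.2, habs2.1]
    calc S.encard = (S \ {a}).encard + 1 := (Set.encard_diff_singleton_add_one haS).symm
      _ ≤ T.encard + 1 := by
          apply add_le_add_left
          have himg : ((fun n : ℤ => n - a) '' (S \ {a})).encard = (S \ {a}).encard :=
            Set.InjOn.encard_image (fun u _ v _ huv => by omega)
          rw [← himg]
          apply Set.encard_le_encard
          rintro m ⟨n, hn, rfl⟩
          exact key n hn

lemma count_neg_side (t : ℝ) (c h : ℝ) :
    {n : ℤ | n ≤ -1 ∧ |bfun t n - c| < h}.encard
      = {n : ℤ | 1 ≤ n ∧ |bfun t n + c| < h}.encard := by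
  have himg : {n : ℤ | n ≤ -1 ∧ |bfun t n - c| < h}
      = (fun n : ℤ => -n) '' {n : ℤ | 1 ≤ n ∧ |bfun t n + c| < h} := by
    ext m
    simp only [Set.mem_setOf_eq, Set.mem_image]
    constructor
    · intro ⟨h1, h2⟩
      refine ⟨-m, ⟨by omega, ?_⟩, by omega⟩
      rw [bfun_neg]
      have he : -bfun t m + c = -(bfun t m - c) := by ring
      rw [he, abs_neg]
      exact h2
    · rintro ⟨n, ⟨h1, h2⟩, rfl⟩
      refine ⟨by omega, ?_⟩
      rw [bfun_neg]
      have he : -bfun t n - c = -(bfun t n + c) := by ring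
      rw [he, abs_neg]
      exact h2
  rw [himg, Set.InjOn.encard_image (neg_injective.injOn)]

lemma count_all {t : ℝ} (ht0 : 0 < t) (ht1 : t ≤ 1) (c h : ℝ) :
    {n : ℤ | |bfun t n - c| < h}.encard
      ≤ 2 * ({n : ℤ | 1 ≤ n ∧ bfun t n < 2 * h}.encard + 1) + 1 := by
  have hsub : {n : ℤ | |bfun t n - c| < h}
      ⊆ ({n : ℤ | n ≤ -1 ∧ |bfun t n - c| < h} ∪ {n : ℤ | 1 ≤ n ∧ |bfun t n - c| < h})
        ∪ {(0:ℤ)} := by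
    intro n hn
    rcases lt_trichotomy n 0 with h1 | h1 | h1
    · exact Or.inl (Or.inl ⟨by omega, hn⟩)
    · exact Or.inr (by simp [h1])
    · exact Or.inl (Or.inr ⟨by omega, hn⟩)
  calc {n : ℤ | |bfun t n - c| < h}.encard
      ≤ (({n : ℤ | n ≤ -1 ∧ |bfun t n - c| < h} ∪ {n : ℤ | 1 ≤ n ∧ |bfun t n - c| < h})
        ∪ {(0:ℤ)}).encard := Set.encard_le_encard hsub
    _ ≤ ({n : ℤ | n ≤ -1 ∧ |bfun t n - c| < h} ∪ {n : ℤ | 1 ≤ n ∧ |bfun t n - c| < h}).encard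
        + ({(0:ℤ)} : Set ℤ).encard := Set.encard_union_le _ _
    _ ≤ ({n : ℤ | n ≤ -1 ∧ |bfun t n - c| < h}.encard
        + {n : ℤ | 1 ≤ n ∧ |bfun t n - c| < h}.encard) + 1 := by
          apply add_le_add (Set.encard_union_le _ _)
          simp
    _ ≤ 2 * ({n : ℤ | 1 ≤ n ∧ bfun t n < 2 * h}.encard + 1) + 1 := by
          apply add_le_add_left
          have hn := count_neg_side t c h
          have h1 : {n : ℤ | 1 ≤ n ∧ |bfun t n + c| < h}.encard
              ≤ {n : ℤ | 1 ≤ n ∧ bfun t n < 2 * h}.encard + 1 := by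
            have := count_pos_side ht0 ht1 (-c) h
            simp only [sub_neg_eq_add] at this
            exact this
          have h2 := count_pos_side ht0 ht1 c h
          rw [hn]
          rw [two_mul]
          exact add_le_add h1 h2


lemma Tbound {t : ℝ} (ht0 : 0 < t) (ht1 : t ≤ 1) {ε : ℝ} (hε : 0 < ε) :
    ∀ᶠ h : ℝ in atTop, ({n : ℤ | 1 ≤ n ∧ bfun t n < 2 * h}.encard : ℝ≥0∞)
      ≤ ENNReal.ofReal (ε * h ^ t) := by
  have e1 : ∀ᶠ h : ℝ in atTop, (1:ℝ) ≤ h := eventually_ge_atTop 1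
  have e2 : ∀ᶠ h : ℝ in atTop, (1:ℝ) ≤ ε * h ^ t :=
    ((tendsto_rpow_atTop ht0).const_mul_atTop hε).eventually_ge_atTop 1
  have e3 : ∀ᶠ h : ℝ in atTop, 2 / ε ^ (1/t) ≤ Real.log ε + t * Real.log h := by
    have ht : Tendsto (fun h : ℝ => Real.log ε + t * Real.log h) atTop atTop :=
      tendsto_atTop_add_const_left _ _ (Real.tendsto_log_atTop.const_mul_atTop ht0)
    exact ht.eventually_ge_atTop _
  filter_upwards [e1, e2, e3] with h h1 h2 h3
  have hh0 : (0:ℝ) < h := by linarith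
  have hkey : ∀ n : ℤ, 1 ≤ n → bfun t n < 2 * h → (n:ℝ) ≤ ε * h ^ t := by
    intro n hn hb
    by_contra hcon
    push_neg at hcon
    have hφ : phifun t (ε * h ^ t) ≤ phifun t (n:ℝ) := phifun_mono ht0 h2 hcon.le
    have hval : phifun t (ε * h ^ t) = ε^(1/t) * h * (Real.log ε + t * Real.log h) := by
      unfold phifun
      rw [Real.mul_rpow (le_of_lt hε) (Real.rpow_nonneg (by linarith) _),
        ← Real.rpow_mul (by linarith : (0:ℝ) ≤ h),
        mul_one_div_cancel (ne_of_gt ht0), Real.rpow_one,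
        Real.log_mul (ne_of_gt hε) (ne_of_gt (Real.rpow_pos_of_pos hh0 t)),
        Real.log_rpow hh0]
    have h2h : 2 * h ≤ phifun t (ε*h^t) := by
      rw [hval]
      have hε' : 0 < ε^(1/t) := Real.rpow_pos_of_pos hε _
      calc 2*h = (2/ε^(1/t)) * ε^(1/t) * h := by field_simp
      _ ≤ (Real.log ε + t*Real.log h) * ε^(1/t) * h := by
            apply mul_le_mul_of_nonneg_right
              (mul_le_mul_of_nonneg_right h3 hε'.le) (by linarith)
      _ = ε^(1/t) * h * (Real.log ε + t*Real.log h) := by ring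
    rw [bfun_eq_phifun hn] at hb
    linarith
  set m := ⌊ε * h ^ t⌋ with hm
  have hm1 : 1 ≤ m := Int.le_floor.mpr (by exact_mod_cast h2)
  have hsub : {n : ℤ | 1 ≤ n ∧ bfun t n < 2*h} ⊆ Set.Icc 1 m :=
    fun n hn => ⟨hn.1, Int.le_floor.mpr (hkey n hn.1 hn.2)⟩
  have h4 : ({n : ℤ | 1 ≤ n ∧ bfun t n < 2*h}.encard) ≤ (Set.Icc (1:ℤ) m).encard :=
    Set.encard_le_encard hsub
  have h5 : (Set.Icc (1:ℤ) m).encard = ((m.toNat : ℕ) : ℕ∞) := by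
    rw [← Finset.coe_Icc, Set.encard_coe_eq_coe_finsetCard, Int.card_Icc]
    congr 1
    omega
  calc ({n : ℤ | 1 ≤ n ∧ bfun t n < 2*h}.encard : ℝ≥0∞)
      ≤ ((Set.Icc (1:ℤ) m).encard : ℝ≥0∞) := by exact_mod_cast ENat.toENNReal_le.mpr h4
  _ = ((m.toNat : ℕ) : ℝ≥0∞) := by rw [h5]; exact_mod_cast rfl
  _ ≤ ENNReal.ofReal (ε * h ^ t) := by
      rw [← ENNReal.ofReal_natCast]
      apply ENNReal.ofReal_le_ofReal
      have hcast : ((m.toNat : ℕ) : ℝ) = (m:ℝ) := by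
        exact_mod_cast congrArg (fun z : ℤ => (z:ℝ)) (Int.toNat_of_nonneg (by omega))
      rw [hcast]
      exact Int.floor_le _

lemma abs_sub_coord (u v : Plane) (i : Fin 2) : |u i - v i| ≤ dist u v := by
  rw [EuclideanSpace.dist_eq,
    show |u i - v i| = Real.sqrt ((u i - v i)^2) from (Real.sqrt_sq_eq_abs _).symm]
  apply Real.sqrt_le_sqrt
  have he : (u i - v i)^2 = dist (u i) (v i)^2 := by rw [Real.dist_eq, sq_abs]
  rw [he]
  exact Finset.single_le_sum (f := fun j => dist (u j) (v j)^2)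
    (fun j _ => sq_nonneg _) (Finset.mem_univ i)

lemma norm_pt_le (a b : ℝ) : ‖(pt a b : Plane)‖ ≤ |a| + |b| := by
  rw [EuclideanSpace.norm_eq]
  have h0 : ∑ i, ‖(pt a b) i‖^2 = a^2 + b^2 := by
    rw [Fin.sum_univ_two]
    show ‖pt a b 0‖ ^ 2 + ‖pt a b 1‖ ^ 2 = _
    rw [pt_apply0, pt_apply1, Real.norm_eq_abs, Real.norm_eq_abs, sq_abs, sq_abs]
  rw [h0, show |a| + |b| = Real.sqrt ((|a|+|b|)^2) from (Real.sqrt_sq (by positivity)).symm]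
  apply Real.sqrt_le_sqrt
  nlinarith [mul_nonneg (abs_nonneg a) (abs_nonneg b), sq_abs a, sq_abs b]

lemma encard_inter (t : ℝ) (s : Set Plane) :
    ((Lam t ∩ s).encard) = {n : ℤ | Ff t n ∈ s}.encard := by
  have hinj : Function.Injective (Ff t) := by
    intro n m hnm
    have h := pt_injective0 hnm
    exact_mod_cast h
  have h1 : Lam t ∩ s = Ff t '' {n : ℤ | Ff t n ∈ s} := by
    ext z
    constructor
    · rintro ⟨⟨n, rfl⟩, hz⟩; exact ⟨n, hz, rfl⟩
    · rintro ⟨n, hn, rfl⟩; exact ⟨⟨n, rfl⟩, hn⟩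
  rw [h1, Set.InjOn.encard_image (hinj.injOn)]

lemma upper_event {t : ℝ} (ht0 : 0 < t) (ht1 : t ≤ 1) {δ : ℝ} (hδ : 0 < δ) :
    ∀ᶠ h : ℝ in atTop, ∀ x : Plane,
      ((Lam t ∩ Metric.ball x h).encard : ℝ≥0∞) ≤ ENNReal.ofReal (δ * h ^ t) := by
  have hε : 0 < δ/4 := by linarith
  have e4 : ∀ᶠ h : ℝ in atTop, (3:ℝ) ≤ (δ/4) * h^t :=
    ((tendsto_rpow_atTop ht0).const_mul_atTop hε).eventually_ge_atTop 3
  filter_upwards [Tbound ht0 ht1 hε, e4, eventually_ge_atTop (1:ℝ)] with h hT h4 h1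
  intro x
  have hc1 : (Lam t ∩ Metric.ball x h).encard
      ≤ 2 * ({n : ℤ | 1 ≤ n ∧ bfun t n < 2*h}.encard + 1) + 1 := by
    rw [encard_inter]
    refine le_trans (Set.encard_le_encard ?_) (count_all ht0 ht1 (x 1) h)
    intro n hn
    have hco := abs_sub_coord (Ff t n) x 1
    have hd : dist (Ff t n) x < h := mem_ball.mp hn
    have hc : (Ff t n) 1 = bfun t n := pt_apply1 _ _
    rw [hc] at hco
    exact lt_of_le_of_lt hco hd
  have hc2 : ((Lam t ∩ Metric.ball x h).encard : ℝ≥0∞)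
      ≤ 2 * (({n : ℤ | 1 ≤ n ∧ bfun t n < 2*h}.encard : ℝ≥0∞) + 1) + 1 := by
    have := ENat.toENNReal_le.mpr hc1
    simp only [ENat.toENNReal_add, ENat.toENNReal_mul, ENat.toENNReal_one,
      ENat.toENNReal_ofNat] at this
    exact this
  have hfinal : 2 * (ENNReal.ofReal ((δ/4) * h^t) + 1) + 1 ≤ ENNReal.ofReal (δ * h ^ t) := by
    have ha : (0:ℝ) ≤ (δ/4) * h^t := by positivity
    have hrw : 2 * (ENNReal.ofReal ((δ/4) * h^t) + 1) + 1
        = ENNReal.ofReal (2 * ((δ/4) * h^t + 1) + 1) := by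
      calc 2 * (ENNReal.ofReal ((δ/4) * h^t) + 1) + 1
          = 2 * (ENNReal.ofReal ((δ/4) * h^t) + ENNReal.ofReal 1) + ENNReal.ofReal 1 := by
            rw [ENNReal.ofReal_one]
        _ = 2 * ENNReal.ofReal ((δ/4) * h^t + 1) + ENNReal.ofReal 1 := by
            rw [ENNReal.ofReal_add ha zero_le_one]
        _ = ENNReal.ofReal 2 * ENNReal.ofReal ((δ/4) * h^t + 1) + ENNReal.ofReal 1 := by
            rw [show ((2:ℝ≥0∞)) = ENNReal.ofReal (2:ℝ) from (ENNReal.ofReal_ofNat 2).symm]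
        _ = ENNReal.ofReal (2 * ((δ/4) * h^t + 1)) + ENNReal.ofReal 1 := by
            rw [← ENNReal.ofReal_mul (by norm_num)]
        _ = ENNReal.ofReal (2 * ((δ/4) * h^t + 1) + 1) := by
            rw [← ENNReal.ofReal_add (by positivity) zero_le_one]
    rw [hrw]
    apply ENNReal.ofReal_le_ofReal
    nlinarith [Real.rpow_nonneg (show (0:ℝ) ≤ h by linarith) t]
  calc ((Lam t ∩ Metric.ball x h).encard : ℝ≥0∞)
      ≤ 2 * (({n : ℤ | 1 ≤ n ∧ bfun t n < 2*h}.encard : ℝ≥0∞) + 1) + 1 := hc2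
  _ ≤ 2 * (ENNReal.ofReal ((δ/4) * h^t) + 1) + 1 := by gcongr
  _ ≤ ENNReal.ofReal (δ * h ^ t) := hfinal

lemma density_zero {t r : ℝ} (ht0 : 0 < t) (ht1 : t ≤ 1) (hr : t ≤ r) :
    beurlingDensity r (Lam t) = 0 := by
  have key : ∀ δ : ℝ, 0 < δ → beurlingDensity r (Lam t) ≤ ENNReal.ofReal δ := by
    intro δ hδ
    apply Filter.limsup_le_of_le (by isBoundedDefault)
    filter_upwards [upper_event ht0 ht1 hδ, eventually_gt_atTop (0:ℝ),
      eventually_ge_atTop (1:ℝ)] with h hup h0 h1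
    apply iSup_le
    intro x
    have hden : ENNReal.ofReal (h^t) ≤ ENNReal.ofReal (h^r) :=
      ENNReal.ofReal_le_ofReal (Real.rpow_le_rpow_of_exponent_le h1 hr)
    calc ((Lam t ∩ Metric.ball x h).encard : ℝ≥0∞) / ENNReal.ofReal (h^r)
        ≤ ENNReal.ofReal (δ*h^t) / ENNReal.ofReal (h^r) :=
          ENNReal.div_le_div_right (hup x) _
    _ ≤ ENNReal.ofReal (δ*h^t) / ENNReal.ofReal (h^t) := ENNReal.div_le_div_left hden _
    _ = ENNReal.ofReal δ := by
        rw [← ENNReal.ofReal_div_of_pos (Real.rpow_pos_of_pos h0 t)]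
        congr 1
        field_simp
  by_contra hne
  rcases eq_or_ne (beurlingDensity r (Lam t)) ⊤ with htop | htop
  · have h1 := key 1 one_pos
    rw [htop] at h1
    exact absurd h1 (by simp [ENNReal.ofReal_one])
  · have h2 : 0 < (beurlingDensity r (Lam t)).toReal := ENNReal.toReal_pos hne htop
    have h3 := key ((beurlingDensity r (Lam t)).toReal/2) (by linarith)
    have hlt : ENNReal.ofReal ((beurlingDensity r (Lam t)).toReal/2)
        < beurlingDensity r (Lam t) := by
      rw [ENNReal.ofReal_lt_iff_lt_toReal (by linarith) htop]
      linarith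
    exact absurd h3 (not_le.mpr hlt)

lemma lower_event {t s : ℝ} (ht0 : 0 < t) (ht1 : t ≤ 1) (hs0 : 0 < s) (hst : s < t) :
    ∀ᶠ h : ℝ in atTop,
      ENNReal.ofReal (h ^ s) ≤ ((Lam t ∩ Metric.ball (0:Plane) h).encard : ℝ≥0∞) := by
  have hstlt : s/t < 1 := (div_lt_one ht0).mpr hst
  set δ := (1 - s/t)/2 with hδdef
  have hδ0 : 0 < δ := by rw [hδdef]; linarith
  set c := s/t + δ with hcdef
  have hc1 : c < 1 := by rw [hcdef, hδdef]; linarith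
  have hsc : s ≤ c := by
    have h1 : s ≤ s/t := by
      rw [le_div_iff₀ ht0]
      nlinarith
    rw [hcdef]; linarith
  have e2 : ∀ᶠ h : ℝ in atTop, 1 + s/δ < h^(1-c) :=
    (tendsto_rpow_atTop (by linarith : (0:ℝ) < 1 - c)).eventually_gt_atTop _
  filter_upwards [eventually_ge_atTop (1:ℝ), e2] with h h1 h2
  have hh0 : (0:ℝ) < h := by linarith
  have hs1 : 1 ≤ h^s := by
    calc (1:ℝ) = h^(0:ℝ) := (Real.rpow_zero h).symm
    _ ≤ h^s := Real.rpow_le_rpow_of_exponent_le h1 hs0.le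
  have hφb : phifun t (h^s) ≤ (s/δ) * h^c := by
    unfold phifun
    rw [← Real.rpow_mul (by linarith : (0:ℝ) ≤ h), Real.log_rpow hh0]
    have hlog : Real.log h ≤ h^δ/δ := Real.log_le_rpow_div (by linarith) hδ0
    calc h^(s*(1/t)) * (s * Real.log h) ≤ h^(s*(1/t)) * (s * (h^δ/δ)) := by
          apply mul_le_mul_of_nonneg_left
            (mul_le_mul_of_nonneg_left hlog hs0.le) (Real.rpow_nonneg (by linarith) _)
    _ = (s/δ) * (h^(s*(1/t)) * h^δ) := by ring
    _ = (s/δ) * h^c := by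
        rw [← Real.rpow_add hh0]
        congr 1
        rw [hcdef]
        ring
  have hnorm : ∀ n : ℤ, 0 ≤ n → (n:ℝ) ≤ h^s → Ff t n ∈ Metric.ball (0:Plane) h := by
    intro n hn0 hnh
    rw [mem_ball, dist_zero_right]
    have hb : |bfun t n| ≤ phifun t (h^s) := by
      rcases eq_or_lt_of_le hn0 with he | hpos
      · rw [← he, bfun_zero]
        simpa using phifun_nonneg (t := t) hs1
      · have h1n : (1:ℤ) ≤ n := by omega
        have h1nr : (1:ℝ) ≤ (n:ℝ) := by exact_mod_cast h1n
        rw [bfun_eq_phifun h1n, abs_of_nonneg (phifun_nonneg h1nr)]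
        exact phifun_mono ht0 h1nr hnh
    calc ‖Ff t n‖ ≤ |(n:ℝ)| + |bfun t n| := norm_pt_le _ _
    _ ≤ h^s + (s/δ)*h^c := by
        apply add_le_add ?_ (hb.trans hφb)
        rw [abs_of_nonneg (by exact_mod_cast hn0 : (0:ℝ) ≤ (n:ℝ))]
        exact hnh
    _ ≤ h^c + (s/δ)*h^c :=
        add_le_add_left (Real.rpow_le_rpow_of_exponent_le h1 hsc) _
    _ = (1 + s/δ) * h^c := by ring
    _ < h^(1-c) * h^c := mul_lt_mul_of_pos_right h2 (Real.rpow_pos_of_pos hh0 c)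
    _ = h := by
        rw [← Real.rpow_add hh0]
        norm_num
  set m := ⌊h^s⌋ with hm
  have hm1 : 1 ≤ m := Int.le_floor.mpr (by exact_mod_cast hs1)
  have hsub : Set.Icc (0:ℤ) m ⊆ {n : ℤ | Ff t n ∈ Metric.ball (0:Plane) h} := by
    rintro n ⟨ha, hb⟩
    apply hnorm n ha
    calc (n:ℝ) ≤ (m:ℝ) := by exact_mod_cast hb
    _ ≤ h^s := Int.floor_le _
  have hcount : (Set.Icc (0:ℤ) m).encard
      ≤ {n : ℤ | Ff t n ∈ Metric.ball (0:Plane) h}.encard := Set.encard_le_encard hsub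
  have hIcc : (Set.Icc (0:ℤ) m).encard = (((m+1).toNat : ℕ) : ℕ∞) := by
    rw [← Finset.coe_Icc, Set.encard_coe_eq_coe_finsetCard, Int.card_Icc]
    congr 1
    omega
  rw [encard_inter]
  have hA : ENNReal.ofReal (h^s) ≤ (((m+1).toNat : ℕ) : ℝ≥0∞) := by
    rw [← ENNReal.ofReal_natCast]
    apply ENNReal.ofReal_le_ofReal
    have hcast : (((m+1).toNat : ℕ) : ℝ) = (m:ℝ) + 1 := by
      exact_mod_cast congrArg (fun z : ℤ => (z:ℝ)) (Int.toNat_of_nonneg (by omega))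
    rw [hcast]
    linarith [Int.lt_floor_add_one (h^s)]
  have hB : (((m+1).toNat : ℕ) : ℝ≥0∞)
      ≤ ({n : ℤ | Ff t n ∈ Metric.ball (0:Plane) h}.encard : ℝ≥0∞) := by
    have h6 := ENat.toENNReal_le.mpr hcount
    rw [hIcc] at h6
    exact_mod_cast h6
  exact hA.trans hB

lemma density_top {t r : ℝ} (ht0 : 0 < t) (ht1 : t ≤ 1) (hr0 : 0 < r) (hrt : r < t) :
    beurlingDensity r (Lam t) = ⊤ := by
  set s := (r+t)/2 with hs
  have hs0 : 0 < s := by rw [hs]; linarith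
  have hst : s < t := by rw [hs]; linarith
  have hrs : r < s := by rw [hs]; linarith
  have hev : ∀ᶠ h : ℝ in atTop, ENNReal.ofReal (h^(s-r))
      ≤ ⨆ x : Plane, ((Lam t ∩ Metric.ball x h).encard : ℝ≥0∞) / ENNReal.ofReal (h^r) := by
    filter_upwards [lower_event ht0 ht1 hs0 hst, eventually_gt_atTop (0:ℝ)] with h hl h0
    have h1 : ENNReal.ofReal (h^(s-r)) = ENNReal.ofReal (h^s) / ENNReal.ofReal (h^r) := by
      rw [Real.rpow_sub h0, ENNReal.ofReal_div_of_pos (Real.rpow_pos_of_pos h0 r)]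
    rw [h1]
    apply le_iSup_of_le (0:Plane)
    exact ENNReal.div_le_div_right hl _
  have htend : Tendsto (fun h : ℝ => ENNReal.ofReal (h^(s-r))) atTop (nhds ⊤) :=
    ENNReal.tendsto_ofReal_atTop.comp (tendsto_rpow_atTop (by linarith))
  have hlim : limsup (fun h : ℝ => ENNReal.ofReal (h^(s-r))) atTop = ⊤ := htend.limsup_eq
  apply top_unique
  rw [← hlim]
  unfold beurlingDensity
  exact limsup_le_limsup hev

lemma dim_eq {t : ℝ} (ht0 : 0 < t) (ht1 : t ≤ 1) : beurlingDim (Lam t) = t := by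
  unfold beurlingDim
  have hset : {r : ℝ | 0 < r ∧ beurlingDensity r (Lam t) = ⊤} = Set.Ioo 0 t := by
    ext r
    simp only [Set.mem_setOf_eq, Set.mem_Ioo]
    constructor
    · rintro ⟨hr0, hrtop⟩
      refine ⟨hr0, ?_⟩
      by_contra hle
      push_neg at hle
      rw [density_zero ht0 ht1 hle] at hrtop
      simp at hrtop
    · rintro ⟨hr0, hrt⟩
      exact ⟨hr0, density_top ht0 ht1 hr0 hrt⟩
  rw [hset, csSup_Ioo ht0]

end Aux

/-- For `t ∈ (0,1]` and `β(n) = sgn(n)·|n|^{1/t}·log|n|` (with `β 0 = 0`),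
the set `Λ_β` is a spectrum of `μ_{R,B}` with `dim_Be(Λ_β) = t` and `D_t^+(Λ_β) = 0`. -/
theorem isSpectrum_muRB_power_log (t : ℝ) (ht : t ∈ Set.Ioc (0 : ℝ) 1) :
    IsSpectrum muRB
        (Set.range fun n : ℤ =>
          pt (n : ℝ) (isgn n * |(n : ℝ)| ^ (1 / t) * Real.log |(n : ℝ)|)) ∧
      beurlingDim
        (Set.range fun n : ℤ =>
          pt (n : ℝ) (isgn n * |(n : ℝ)| ^ (1 / t) * Real.log |(n : ℝ)|)) = t ∧
      beurlingDensity t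
        (Set.range fun n : ℤ =>
          pt (n : ℝ) (isgn n * |(n : ℝ)| ^ (1 / t) * Real.log |(n : ℝ)|)) = 0 := by
  obtain ⟨ht0, ht1⟩ := ht
  refine ⟨⟨?_, ?_⟩, ?_, ?_⟩
  · exact orthonormal_range_aux (fun n => isgn n * |(n : ℝ)| ^ (1 / t) * Real.log |(n : ℝ)|)
  · exact span_closure_aux (fun n => isgn n * |(n : ℝ)| ^ (1 / t) * Real.log |(n : ℝ)|)
  · exact dim_eq ht0 ht1
  · exact density_zero ht0 ht1 le_rfl
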